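/- arXiv:2007.02541 — 2 statements merged into one kernel-verified Lean document; each statement's English description precedes it below -/
import Mathlib

section
/- For all real α, β > 1/2, the multivariate Beta function satisfies B₂(α+1, β) = (α(α−1/2))/((α+β)(α+β−1/2)) · B₂(α, β). -/
open MeasureTheory Real Filter Finset

/-- The domain Ω: the set of (x,y,z) such that w = [[x,z],[z,y]] and I − w
are both positive definite. -/
def Omega : Set (ℝ × ℝ × ℝ) :=
  {p | 0 < p.1 ∧ 0 < 1 - p.1 ∧ 0 < p.1 * p.2.1 - p.2.2 ^ 2 ∧
    0 < (1 - p.1) * (1 - p.2.1) - p.2.2 ^ 2}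

/-- Unnormalized density of the 2×2 multivariate Beta distribution. -/
noncomputable def betaDens (α β : ℝ) (p : ℝ × ℝ × ℝ) : ℝ :=
  ((1 - p.1) * (1 - p.2.1) - p.2.2 ^ 2) ^ (α - 3/2) *
    (p.1 * p.2.1 - p.2.2 ^ 2) ^ (β - 3/2)

/-- The multivariate Beta function B₂(α,β). -/
noncomputable def B2 (α β : ℝ) : ℝ := ∫ p in Omega, betaDens α β p

/-- Expectation E_{α,β}[f(X,Y,Z)] under the 2×2 multivariate Beta distribution. -/
noncomputable def Eab (α β : ℝ) (f : ℝ × ℝ × ℝ → ℝ) : ℝ :=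
  (B2 α β)⁻¹ * ∫ p in Omega, f p * betaDens α β p

noncomputable def rB (u v : ℝ) : ℝ := ∫ x in (0:ℝ)..1, x ^ (u-1) * (1-x) ^ (v-1)

lemma rB_intervalIntegrable {u v : ℝ} (hu : 0 < u) (hv : 0 < v) :
    IntervalIntegrable (fun x : ℝ => x ^ (u-1) * (1-x) ^ (v-1)) volume 0 1 := by
  have h := Complex.betaIntegral_convergent (u := u) (v := v) (by simpa) (by simpa)
  rw [intervalIntegrable_iff_integrableOn_Ioc_of_le (by norm_num)] at h ⊢
  have h2 : IntegrableOn
      (fun x : ℝ => ((x:ℂ) ^ ((u:ℂ) - 1) * (1 - (x:ℂ)) ^ ((v:ℂ) - 1)).re) (Set.Ioc 0 1) volume :=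
    h.re
  apply h2.congr_fun _ measurableSet_Ioc
  intro x hx
  simp only [Set.mem_Ioc] at hx
  simp only
  rw [show ((u:ℂ) - 1) = ((u - 1 : ℝ) : ℂ) by push_cast; ring,
    show ((v:ℂ) - 1) = ((v - 1 : ℝ) : ℂ) by push_cast; ring,
    ← Complex.ofReal_cpow hx.1.le, ← Complex.ofReal_one, ← Complex.ofReal_sub,
    ← Complex.ofReal_cpow (by linarith [hx.2] : (0:ℝ) ≤ 1 - x),
    ← Complex.ofReal_mul, Complex.ofReal_re]

lemma rB_eq_Gamma {u v : ℝ} (hu : 0 < u) (hv : 0 < v) :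
    rB u v = Real.Gamma u * Real.Gamma v / Real.Gamma (u+v) := by
  have key := Complex.Gamma_mul_Gamma_eq_betaIntegral (s := u) (t := v) (by simpa) (by simpa)
  have hbeta : Complex.betaIntegral u v = ((rB u v : ℝ) : ℂ) := by
    rw [Complex.betaIntegral, rB, ← intervalIntegral.integral_ofReal]
    apply intervalIntegral.integral_congr
    intro x hx
    rw [Set.uIcc_of_le (by norm_num : (0:ℝ) ≤ 1)] at hx
    push_cast
    rw [show ((u:ℂ) - 1) = ((u - 1 : ℝ) : ℂ) by push_cast; ring,
      show ((v:ℂ) - 1) = ((v - 1 : ℝ) : ℂ) by push_cast; ring,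
      ← Complex.ofReal_cpow hx.1, ← Complex.ofReal_one, ← Complex.ofReal_sub,
      ← Complex.ofReal_cpow (by linarith [hx.2] : (0:ℝ) ≤ 1 - x)]
  rw [hbeta, ← Complex.ofReal_add, Complex.Gamma_ofReal, Complex.Gamma_ofReal,
    Complex.Gamma_ofReal, ← Complex.ofReal_mul, ← Complex.ofReal_mul] at key
  have := Complex.ofReal_inj.mp key
  have hG : Real.Gamma (u + v) ≠ 0 := (Real.Gamma_pos_of_pos (by linarith)).ne'
  field_simp
  linarith [this]

lemma rB_nonneg (u v : ℝ) : 0 ≤ rB u v := by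
  apply intervalIntegral.integral_nonneg (by norm_num)
  intro x hx
  have h1 : (0:ℝ) ≤ x := hx.1
  have h2 : (0:ℝ) ≤ 1 - x := by linarith [hx.2]
  positivity

lemma lint_Ioo {p q : ℝ} {g : ℝ → ℝ} (hpq : p ≤ q)
    (hint : IntervalIntegrable g volume p q) (hg : ∀ y ∈ Set.Ioo p q, 0 ≤ g y) :
    ∫⁻ y in Set.Ioo p q, ENNReal.ofReal (g y) = ENNReal.ofReal (∫ y in p..q, g y) := by
  rw [intervalIntegral.integral_of_le hpq, MeasureTheory.integral_Ioc_eq_integral_Ioo]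
  refine (ofReal_integral_eq_lintegral_ofReal ?_ ?_).symm
  · exact ((intervalIntegrable_iff_integrableOn_Ioc_of_le hpq).mp hint).mono_set
      Set.Ioo_subset_Ioc_self
  · exact (ae_restrict_iff' measurableSet_Ioo).2 (ae_of_all _ hg)

lemma II_comp_affine {F : ℝ → ℝ} (hF : IntervalIntegrable F volume 0 1) {L d : ℝ}
    (hL : L ≠ 0) : IntervalIntegrable (fun y => F ((y - d)/L)) volume d (L + d) := by
  have h1 := hF.comp_mul_right (c := L⁻¹)
  rw [zero_div, one_div, inv_inv] at h1
  have h2 := h1.comp_sub_right d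
  rw [zero_add] at h2
  refine h2.congr ?_
  intro y _
  simp only [div_eq_mul_inv]

lemma II_congr_uIcc {f g : ℝ → ℝ} {a b : ℝ} (h : ∀ x ∈ Set.uIcc a b, f x = g x)
    (hg : IntervalIntegrable g volume a b) : IntervalIntegrable f volume a b := by
  refine hg.congr ?_
  intro x hx
  exact (h x (Set.uIoc_subset_uIcc hx)).symm

/-- value of the inner y-integral -/
lemma Iy_val {x z : ℝ} (a b : ℝ) (hx0 : 0 < x) (hx1 : x < 1)
    (hL : 0 < 1 - z^2/(x*(1-x))) :
    ∫ y in (z^2/x)..(1 - z^2/(1-x)), ((1-x)*(1-y)-z^2)^a * (x*y-z^2)^b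
    = (1 - z^2/(x*(1-x)))^(a+b+1) * ((1-x)^a * x^b) *
        ∫ s in (0:ℝ)..1, (1-s)^a * s^b := by
  have h1x : 0 < 1 - x := by linarith
  set L : ℝ := 1 - z^2/(x*(1-x)) with hLdef
  have hq : 1 - z^2/(1-x) = L * 1 + z^2/x := by
    rw [hLdef]; field_simp; ring
  have hp : z^2/x = L * 0 + z^2/x := by ring
  rw [hp, hq, ← intervalIntegral.smul_integral_comp_mul_add
    (fun y => ((1-x)*(1-y)-z^2)^a * (x*y-z^2)^b) L (z^2/x)]
  have hcong : ∀ s ∈ Set.uIcc (0:ℝ) 1,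
      ((1-x)*(1-(L*s+z^2/x))-z^2)^a * (x*(L*s+z^2/x)-z^2)^b
      = (((1-x)^a * L^a) * (x^b * L^b)) * ((1-s)^a * s^b) := by
    intro s hs
    rw [Set.uIcc_of_le (by norm_num : (0:ℝ) ≤ 1)] at hs
    have h1 : (1-x)*(1-(L*s+z^2/x))-z^2 = ((1-x)*L) * (1-s) := by
      rw [hLdef]; field_simp; ring
    have h2 : x*(L*s+z^2/x)-z^2 = (x*L) * s := by
      rw [hLdef]; field_simp; ring
    rw [h1, h2, Real.mul_rpow (by positivity) (by linarith [hs.2]),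
      Real.mul_rpow (by positivity) hs.1,
      Real.mul_rpow (by positivity) hL.le, Real.mul_rpow hx0.le hL.le]
    ring
  rw [intervalIntegral.integral_congr hcong, intervalIntegral.integral_const_mul,
    smul_eq_mul]
  rw [show L^(a+b+1) = L * (L^a * L^b) by
    rw [Real.rpow_add_one hL.ne', Real.rpow_add hL]; ring]
  ring

/-- value of the middle t-integral -/
lemma Jval (p : ℝ) :
    ∫ t in (-1:ℝ)..1, (1-t^2)^p
    = 2 * 4^p * ∫ s in (0:ℝ)..1, (1-s)^p * s^p := by
  have hcong : ∀ t ∈ Set.uIcc (-1:ℝ) 1,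
      (1-t^2)^p = 4^p * ((fun s => (1-s)^p * s^p) ((2:ℝ)⁻¹*t + 2⁻¹)) := by
    intro t ht
    rw [Set.uIcc_of_le (by norm_num : (-1:ℝ) ≤ 1)] at ht
    simp only
    have h1 : 1 - (2⁻¹*t + 2⁻¹) = (1-t)/2 := by ring
    have h2 : (2:ℝ)⁻¹*t + 2⁻¹ = (1+t)/2 := by ring
    rw [h1, h2, ← Real.mul_rpow (by linarith [ht.2] : (0:ℝ) ≤ (1-t)/2)
      (by linarith [ht.1] : (0:ℝ) ≤ (1+t)/2),
      ← Real.mul_rpow (by norm_num) (by nlinarith [ht.1, ht.2])]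
    congr 1
    ring
  rw [intervalIntegral.integral_congr hcong, intervalIntegral.integral_const_mul,
    intervalIntegral.integral_comp_mul_add (fun s => (1-s)^p * s^p)
      (by norm_num : (2:ℝ)⁻¹ ≠ 0) 2⁻¹]
  norm_num
  ring

lemma I1_eq (a b : ℝ) : ∫ s in (0:ℝ)..1, (1-s)^a * s^b = rB (b+1) (a+1) := by
  rw [rB]
  refine intervalIntegral.integral_congr fun s _ => ?_
  rw [show b+1-1 = b by ring, show a+1-1 = a by ring]
  ring

lemma Omega_meas : MeasurableSet Omega := by
  have m1 : Measurable fun p : ℝ×ℝ×ℝ => p.1 := measurable_fst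
  have m2 : Measurable fun p : ℝ×ℝ×ℝ => p.2.1 := measurable_fst.comp measurable_snd
  have m3 : Measurable fun p : ℝ×ℝ×ℝ => p.2.2 := measurable_snd.comp measurable_snd
  exact (measurableSet_lt measurable_const m1).inter
    ((measurableSet_lt measurable_const (measurable_const.sub m1)).inter
    ((measurableSet_lt measurable_const ((m1.mul m2).sub (m3.pow_const 2))).inter
    (measurableSet_lt measurable_const
      (((measurable_const.sub m1).mul (measurable_const.sub m2)).sub (m3.pow_const 2)))))

lemma betaDens_ind_meas (α β : ℝ) :
    Measurable (Omega.indicator (fun q => ENNReal.ofReal (betaDens α β q))) := by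
  have m1 : Measurable fun p : ℝ×ℝ×ℝ => p.1 := measurable_fst
  have m2 : Measurable fun p : ℝ×ℝ×ℝ => p.2.1 := measurable_fst.comp measurable_snd
  have m3 : Measurable fun p : ℝ×ℝ×ℝ => p.2.2 := measurable_snd.comp measurable_snd
  have h : Omega.indicator (fun q => ENNReal.ofReal (betaDens α β q))
      = Omega.indicator (fun q => ENNReal.ofReal
          (Real.exp (Real.log ((1-q.1)*(1-q.2.1)-q.2.2^2) * (α-3/2)) *
           Real.exp (Real.log (q.1*q.2.1-q.2.2^2) * (β-3/2)))) := by
    funext q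
    by_cases hq : q ∈ Omega
    · rw [Set.indicator_of_mem hq, Set.indicator_of_mem hq]
      obtain ⟨h1, h2, h3, h4⟩ := hq
      congr 1
      unfold betaDens
      rw [Real.rpow_def_of_pos h4, Real.rpow_def_of_pos h3]
    · rw [Set.indicator_of_notMem hq, Set.indicator_of_notMem hq]
  rw [h]
  refine Measurable.indicator ?_ Omega_meas
  apply ENNReal.measurable_ofReal.comp
  exact ((Real.measurable_exp.comp
      (((((measurable_const.sub m1).mul (measurable_const.sub m2)).sub
        (m3.pow_const 2)).log).mul measurable_const))).mul
    (Real.measurable_exp.comp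
      ((((m1.mul m2).sub (m3.pow_const 2)).log).mul measurable_const))

set_option maxHeartbeats 1000000 in
lemma lint_main {α β : ℝ} (hα : 1/2 < α) (hβ : 1/2 < β) :
    ∫⁻ q in Omega, ENNReal.ofReal (betaDens α β q)
    = ENNReal.ofReal (rB (β-1/2) (α-1/2) * (2 * 4^(α+β-2) * rB (α+β-1) (α+β-1)) * rB β α) := by
  have hdmi := betaDens_ind_meas α β
  have hOm := Omega_meas
  -- interval integrability facts
  have hF1 : IntervalIntegrable (fun s : ℝ => (1-s)^(α-3/2) * s^(β-3/2)) volume 0 1 := by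
    refine II_congr_uIcc (fun s _ => ?_)
      (rB_intervalIntegrable (u := β-1/2) (v := α-1/2) (by linarith) (by linarith))
    rw [show β-1/2-1 = β-3/2 by ring, show α-1/2-1 = α-3/2 by ring]
    ring
  have hF3 : IntervalIntegrable (fun s : ℝ => (1-s)^(α+β-2) * s^(α+β-2)) volume 0 1 := by
    refine II_congr_uIcc (fun s _ => ?_)
      (rB_intervalIntegrable (u := α+β-1) (v := α+β-1) (by linarith) (by linarith))
    rw [show α+β-1-1 = α+β-2 by ring]
    ring
  have hF2 : IntervalIntegrable (fun t : ℝ => (1-t^2)^(α+β-2)) volume (-1) 1 := by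
    have h := II_comp_affine (hF3.const_mul ((4:ℝ)^(α+β-2))) (L := 2) (d := -1) two_ne_zero
    rw [show (2:ℝ) + -1 = 1 by norm_num] at h
    refine II_congr_uIcc (fun t ht => ?_) h
    rw [Set.uIcc_of_le (by norm_num : (-1:ℝ) ≤ 1)] at ht
    have h1 : 1 - (t - -1)/2 = (1-t)/2 := by ring
    have h2 : (t - -1)/2 = (1+t)/2 := by ring
    rw [h1, h2, ← Real.mul_rpow (by linarith [ht.2] : (0:ℝ) ≤ (1-t)/2)
      (by linarith [ht.1] : (0:ℝ) ≤ (1+t)/2),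
      ← Real.mul_rpow (by norm_num) (by nlinarith [ht.1, ht.2])]
    congr 1
    ring
  rw [← lintegral_indicator hOm, Measure.volume_eq_prod,
    lintegral_prod _ hdmi.aemeasurable]
  set Cmid : ℝ := 2 * 4^(α+β-2) * rB (α+β-1) (α+β-1) with hCmid
  have key : ∀ x : ℝ,
      (∫⁻ q : ℝ×ℝ, Omega.indicator (fun q => ENNReal.ofReal (betaDens α β q)) (x, q))
      = (Set.Ioo (0:ℝ) 1).indicator (fun x => ENNReal.ofReal
          (Real.sqrt (x*(1-x)) * Cmid *
            (((1-x)^(α-3/2) * x^(β-3/2)) * rB (β-1/2) (α-1/2)))) x := by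
    intro x
    by_cases hx : x ∈ Set.Ioo (0:ℝ) 1
    · obtain ⟨hx0, hx1⟩ := hx
      have h1x : 0 < 1 - x := by linarith
      have hcpos : 0 < Real.sqrt (x*(1-x)) := Real.sqrt_pos.mpr (by positivity)
      set c := Real.sqrt (x*(1-x)) with hcdef
      have hc2 : c^2 = x*(1-x) := Real.sq_sqrt (by positivity)
      rw [Set.indicator_of_mem (Set.mem_Ioo.mpr ⟨hx0, hx1⟩), Measure.volume_eq_prod,
        lintegral_prod_symm
          (fun q : ℝ×ℝ => Omega.indicator (fun q => ENNReal.ofReal (betaDens α β q)) (x, q))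
          (Measurable.aemeasurable (by exact hdmi.comp measurable_prodMk_left))]
      have hzstep : ∀ z : ℝ,
          (∫⁻ y, Omega.indicator (fun q => ENNReal.ofReal (betaDens α β q)) (x, (y, z)))
          = (Set.Ioo (-c) c).indicator (fun z => ENNReal.ofReal
              ((1 - z^2/(x*(1-x)))^(α+β-2) * ((1-x)^(α-3/2) * x^(β-3/2)) *
                rB (β-1/2) (α-1/2))) z := by
        intro z
        have hind : ∀ y, Omega.indicator (fun q => ENNReal.ofReal (betaDens α β q)) (x, (y, z))
            = (Set.Ioo (z^2/x) (1 - z^2/(1-x))).indicator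
              (fun y => ENNReal.ofReal (((1-x)*(1-y)-z^2)^(α-3/2) * (x*y-z^2)^(β-3/2))) y := by
          intro y
          have hmem : (x, (y, z)) ∈ Omega ↔ y ∈ Set.Ioo (z^2/x) (1 - z^2/(1-x)) := by
            simp only [Omega, Set.mem_setOf_eq, Set.mem_Ioo]
            constructor
            · rintro ⟨-, -, h3, h4⟩
              refine ⟨by rw [div_lt_iff₀ hx0]; nlinarith, ?_⟩
              have h5 : z^2/(1-x) < 1 - y := by rw [div_lt_iff₀ h1x]; nlinarith
              linarith
            · rintro ⟨h3, h4⟩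
              refine ⟨hx0, h1x, ?_, ?_⟩
              · have := (div_lt_iff₀ hx0).mp h3; nlinarith
              · have h5 : z^2/(1-x) < 1 - y := by linarith
                have := (div_lt_iff₀ h1x).mp h5; nlinarith
          by_cases hy : y ∈ Set.Ioo (z^2/x) (1 - z^2/(1-x))
          · rw [Set.indicator_of_mem (hmem.mpr hy), Set.indicator_of_mem hy]
            rfl
          · rw [Set.indicator_of_notMem (fun h => hy (hmem.mp h)),
              Set.indicator_of_notMem hy]
        rw [lintegral_congr hind, lintegral_indicator measurableSet_Ioo]
        by_cases hz : z^2 < x*(1-x)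
        · have hzmem : z ∈ Set.Ioo (-c) c := by
            rw [Set.mem_Ioo, ← abs_lt, ← Real.sqrt_sq_eq_abs, hcdef]
            exact Real.sqrt_lt_sqrt (sq_nonneg z) hz
          have hL : 0 < 1 - z^2/(x*(1-x)) := by
            rw [sub_pos, div_lt_one (by positivity)]; exact hz
          have hdiff : 1 - z^2/(1-x) - z^2/x = (x*(1-x) - z^2)/(x*(1-x)) := by
            field_simp; ring
          have hpq : z^2/x ≤ 1 - z^2/(1-x) := by
            have h' : (0:ℝ) ≤ (x*(1-x) - z^2)/(x*(1-x)) :=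
              div_nonneg (by linarith) (by positivity)
            linarith [hdiff, h']
          have hintg : IntervalIntegrable
              (fun y => ((1-x)*(1-y)-z^2)^(α-3/2) * (x*y-z^2)^(β-3/2)) volume
              (z^2/x) (1 - z^2/(1-x)) := by
            set L : ℝ := 1 - z^2/(x*(1-x)) with hLdef
            have hq' : 1 - z^2/(1-x) = L + z^2/x := by rw [hLdef]; field_simp; ring
            rw [hq']
            have hA := II_comp_affine (hF1.const_mul
              (((1-x)^(α-3/2) * L^(α-3/2)) * (x^(β-3/2) * L^(β-3/2)))) (L := L)
              (d := z^2/x) hL.ne'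
            refine II_congr_uIcc (fun y hy => ?_) hA
            rw [Set.uIcc_of_le (by linarith : z^2/x ≤ L + z^2/x)] at hy
            have h1 : (1-x)*(1-y)-z^2 = ((1-x)*L) * (1-(y - z^2/x)/L) := by
              have e : ((1-x)*L) * (1-(y - z^2/x)/L) = (1-x)*((L + z^2/x) - y) := by
                field_simp [hL.ne', hx0.ne']
                ring
              rw [e, ← hq']
              field_simp [h1x.ne']
              ring
            have h2 : x*y-z^2 = (x*L) * ((y - z^2/x)/L) := by
              have e : (x*L) * ((y - z^2/x)/L) = x*(y - z^2/x) := by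
                field_simp [hL.ne']
              rw [e]
              field_simp [hx0.ne']
            have hs0 : (0:ℝ) ≤ (y - z^2/x)/L := div_nonneg (by linarith [hy.1]) hL.le
            have hs1 : (y - z^2/x)/L ≤ 1 := by
              rw [div_le_one hL]; linarith [hy.2]
            rw [h1, h2, Real.mul_rpow (by positivity) (by linarith),
              Real.mul_rpow (by positivity) hs0,
              Real.mul_rpow (by positivity) hL.le, Real.mul_rpow hx0.le hL.le]
            ring
          have hnn : ∀ y ∈ Set.Ioo (z^2/x) (1 - z^2/(1-x)),
              0 ≤ ((1-x)*(1-y)-z^2)^(α-3/2) * (x*y-z^2)^(β-3/2) := by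
            intro y hy
            have hb1 : 0 < x*y-z^2 := by
              have := (div_lt_iff₀ hx0).mp hy.1; nlinarith
            have hb2 : 0 < (1-x)*(1-y)-z^2 := by
              have h5 : z^2/(1-x) < 1 - y := by linarith [hy.2]
              have := (div_lt_iff₀ h1x).mp h5; nlinarith
            positivity
          rw [lint_Ioo hpq hintg hnn, Iy_val (α-3/2) (β-3/2) hx0 hx1 hL, I1_eq,
            Set.indicator_of_mem hzmem,
            show α-3/2+(β-3/2)+1 = α+β-2 by ring, show β-3/2+1 = β-1/2 by ring,
            show α-3/2+1 = α-1/2 by ring]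
        · have h1 : 1 - z^2/(1-x) ≤ z^2/x := by
            have hdiff : 1 - z^2/(1-x) - z^2/x = (x*(1-x) - z^2)/(x*(1-x)) := by
              field_simp; ring
            have h' : (x*(1-x) - z^2)/(x*(1-x)) ≤ 0 :=
              div_nonpos_of_nonpos_of_nonneg (by linarith [not_lt.1 hz]) (by positivity)
            linarith [hdiff, h']
          have hznot : z ∉ Set.Ioo (-c) c := by
            intro hzz
            apply hz
            rw [← hc2, ← sq_abs]
            exact pow_lt_pow_left₀ (abs_lt.2 ⟨hzz.1, hzz.2⟩) (abs_nonneg z) (by norm_num)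
          rw [Set.Ioo_eq_empty (not_lt.2 h1), Set.indicator_of_notMem hznot]
          simp
      rw [lintegral_congr hzstep, lintegral_indicator measurableSet_Ioo]
      set Cx : ℝ := ((1-x)^(α-3/2) * x^(β-3/2)) * rB (β-1/2) (α-1/2) with hCx
      have hCxnn : 0 ≤ Cx := by
        rw [hCx]
        have := rB_nonneg (β-1/2) (α-1/2)
        positivity
      rw [setLIntegral_congr_fun measurableSet_Ioo (
        (fun z _ => congrArg ENNReal.ofReal
          (show (1 - z^2/(x*(1-x)))^(α+β-2) * ((1-x)^(α-3/2) * x^(β-3/2)) *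
              rB (β-1/2) (α-1/2)
            = (fun t : ℝ => (1-t^2)^(α+β-2)) (z/c) * Cx by
            simp only
            rw [div_pow, hc2, hCx]; ring)))]
      have hintz : IntervalIntegrable (fun z => (fun t : ℝ => (1-t^2)^(α+β-2)) (z/c) * Cx)
          volume (-c) c := by
        have h := (hF2.comp_mul_right (c := c⁻¹)).mul_const Cx
        have e1 : (-1:ℝ)/c⁻¹ = -c := by field_simp
        have e2 : (1:ℝ)/c⁻¹ = c := by field_simp
        rw [e1, e2] at h
        refine II_congr_uIcc (fun z _ => ?_) h
        rw [div_eq_mul_inv]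
      have hnnz : ∀ z ∈ Set.Ioo (-c) c,
          0 ≤ (fun t : ℝ => (1-t^2)^(α+β-2)) (z/c) * Cx := by
        intro z hz
        have : z^2 < c^2 := by
          rw [← sq_abs]
          exact pow_lt_pow_left₀ (abs_lt.2 ⟨hz.1, hz.2⟩) (abs_nonneg z) (by norm_num)
        have hpos : 0 < 1 - (z/c)^2 := by
          rw [div_pow, sub_pos, div_lt_one (by positivity)]; exact this
        simp only
        positivity
      rw [lint_Ioo (by linarith : -c ≤ c) hintz hnnz]
      have hval : (∫ z in (-c)..c, (fun t : ℝ => (1-t^2)^(α+β-2)) (z/c) * Cx)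
          = c * Cmid * Cx := by
        rw [intervalIntegral.integral_mul_const,
          intervalIntegral.integral_comp_div (fun t : ℝ => (1-t^2)^(α+β-2)) hcpos.ne',
          neg_div, div_self hcpos.ne', Jval, I1_eq, smul_eq_mul, hCmid,
          show α+β-2+1 = α+β-1 by ring]
      rw [hval]
    · rw [Set.indicator_of_notMem hx]
      have hz0 : ∀ q : ℝ×ℝ,
          Omega.indicator (fun q => ENNReal.ofReal (betaDens α β q)) (x, q) = 0 := by
        intro q
        apply Set.indicator_of_notMem
        intro hq
        exact hx ⟨hq.1, by linarith [hq.2.1]⟩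
      rw [lintegral_congr hz0]
      exact lintegral_zero
  rw [lintegral_congr key, lintegral_indicator measurableSet_Ioo]
  have hxcong : ∀ x ∈ Set.Ioo (0:ℝ) 1,
      ENNReal.ofReal (Real.sqrt (x*(1-x)) * Cmid *
        (((1-x)^(α-3/2) * x^(β-3/2)) * rB (β-1/2) (α-1/2)))
      = ENNReal.ofReal ((Cmid * rB (β-1/2) (α-1/2)) * (x^(β-1) * (1-x)^(α-1))) := by
    intro x hx
    obtain ⟨hx0, hx1⟩ := hx
    have h1x : 0 < 1 - x := by linarith
    congr 1
    have e1 : x^(β-1) = x^((1:ℝ)/2) * x^(β-3/2) := by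
      rw [← Real.rpow_add hx0, show (1:ℝ)/2 + (β-3/2) = β-1 by ring]
    have e2 : (1-x)^(α-1) = (1-x)^((1:ℝ)/2) * (1-x)^(α-3/2) := by
      rw [← Real.rpow_add h1x, show (1:ℝ)/2 + (α-3/2) = α-1 by ring]
    rw [e1, e2, Real.sqrt_eq_rpow, Real.mul_rpow hx0.le h1x.le]
    ring
  rw [setLIntegral_congr_fun measurableSet_Ioo hxcong]
  have hCnn : 0 ≤ Cmid * rB (β-1/2) (α-1/2) := by
    have h1 := rB_nonneg (α+β-1) (α+β-1)
    have h2 := rB_nonneg (β-1/2) (α-1/2)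
    rw [hCmid]
    positivity
  have hintx : IntervalIntegrable
      (fun x : ℝ => (Cmid * rB (β-1/2) (α-1/2)) * (x^(β-1) * (1-x)^(α-1))) volume 0 1 :=
    (rB_intervalIntegrable (u := β) (v := α) (by linarith) (by linarith)).const_mul _
  have hnnx : ∀ x ∈ Set.Ioo (0:ℝ) 1,
      0 ≤ (Cmid * rB (β-1/2) (α-1/2)) * (x^(β-1) * (1-x)^(α-1)) := by
    intro x hx
    have hx0 : (0:ℝ) < x := hx.1
    have h1x : (0:ℝ) < 1 - x := by linarith [hx.2]
    positivity
  rw [lint_Ioo (by norm_num) hintx hnnx, intervalIntegral.integral_const_mul,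
    show (∫ x in (0:ℝ)..1, x^(β-1) * (1-x)^(α-1)) = rB β α from rfl]
  congr 1
  ring

lemma surr_meas (α β : ℝ) : Measurable (fun q : ℝ×ℝ×ℝ =>
    Real.exp (Real.log ((1-q.1)*(1-q.2.1)-q.2.2^2) * (α-3/2)) *
      Real.exp (Real.log (q.1*q.2.1-q.2.2^2) * (β-3/2))) := by
  have m1 : Measurable fun p : ℝ×ℝ×ℝ => p.1 := measurable_fst
  have m2 : Measurable fun p : ℝ×ℝ×ℝ => p.2.1 := measurable_fst.comp measurable_snd
  have m3 : Measurable fun p : ℝ×ℝ×ℝ => p.2.2 := measurable_snd.comp measurable_snd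
  exact ((Real.measurable_exp.comp
      (((((measurable_const.sub m1).mul (measurable_const.sub m2)).sub
        (m3.pow_const 2)).log).mul measurable_const))).mul
    (Real.measurable_exp.comp
      ((((m1.mul m2).sub (m3.pow_const 2)).log).mul measurable_const))

lemma betaDens_eq_surr {α β : ℝ} {q : ℝ×ℝ×ℝ} (hq : q ∈ Omega) :
    betaDens α β q = Real.exp (Real.log ((1-q.1)*(1-q.2.1)-q.2.2^2) * (α-3/2)) *
      Real.exp (Real.log (q.1*q.2.1-q.2.2^2) * (β-3/2)) := by
  obtain ⟨h1, h2, h3, h4⟩ := hq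
  unfold betaDens
  rw [Real.rpow_def_of_pos h4, Real.rpow_def_of_pos h3]

lemma B2_eq {α β : ℝ} (hα : 1/2 < α) (hβ : 1/2 < β) :
    B2 α β = rB (β-1/2) (α-1/2) * (2 * 4^(α+β-2) * rB (α+β-1) (α+β-1)) * rB β α := by
  have hnn : 0 ≤ᵐ[volume.restrict Omega] betaDens α β :=
    (ae_restrict_iff' Omega_meas).2 (ae_of_all _ (fun q hq => by
      obtain ⟨h1, h2, h3, h4⟩ := hq
      unfold betaDens
      positivity))
  have hmeas : AEStronglyMeasurable (betaDens α β) (volume.restrict Omega) := by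
    refine ((surr_meas α β).aestronglyMeasurable).congr ?_
    refine (ae_restrict_iff' Omega_meas).2 (ae_of_all _ (fun q hq => ?_))
    exact (betaDens_eq_surr hq).symm
  rw [B2, integral_eq_lintegral_of_nonneg_ae hnn hmeas, lint_main hα hβ,
    ENNReal.toReal_ofReal]
  have h1 := rB_nonneg (β-1/2) (α-1/2)
  have h2 := rB_nonneg (α+β-1) (α+β-1)
  have h3 := rB_nonneg β α
  positivity

set_option maxHeartbeats 1000000 in
/-- B₂(α+1,β) = α(α−1/2)/((α+β)(α+β−1/2)) · B₂(α,β). -/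
theorem B2_alpha_succ (α β : ℝ) (hα : 1/2 < α) (hβ : 1/2 < β) :
    B2 (α + 1) β = (α * (α - 1/2)) / ((α + β) * (α + β - 1/2)) * B2 α β := by
  have hαβ1 : (0:ℝ) < α + β - 1 := by linarith
  have hαβ : (0:ℝ) < α + β := by linarith
  have hα2 : (0:ℝ) < α - 1/2 := by linarith
  have hβ2 : (0:ℝ) < β - 1/2 := by linarith
  have hG6 : Real.Gamma (α+β) = (α+β-1) * Real.Gamma (α+β-1) := by
    have h := Real.Gamma_add_one hαβ1.ne'
    rw [show α+β-1+1 = α+β by ring] at h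
    exact h
  have e1 : rB (β-1/2) (α+1-1/2)
      = Real.Gamma (β-1/2) * ((α-1/2) * Real.Gamma (α-1/2)) / Real.Gamma (α+β) := by
    rw [rB_eq_Gamma hβ2 (by linarith), show β-1/2+(α+1-1/2) = α+β by ring,
      show α+1-1/2 = (α-1/2)+1 by ring, Real.Gamma_add_one hα2.ne']
  have e2 : rB (α+1+β-1) (α+1+β-1)
      = Real.Gamma (α+β) * Real.Gamma (α+β) /
        (((α+β-1+(α+β-1))+1) * ((α+β-1+(α+β-1)) *
          Real.Gamma (α+β-1+(α+β-1)))) := by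
    rw [show α+1+β-1 = α+β by ring, rB_eq_Gamma hαβ hαβ,
      show α+β+(α+β) = ((α+β-1+(α+β-1))+1)+1 by ring,
      Real.Gamma_add_one (by positivity : ((α+β-1+(α+β-1))+1) ≠ 0),
      Real.Gamma_add_one (by positivity : (α+β-1+(α+β-1)) ≠ 0)]
  have e3 : rB β (α+1)
      = Real.Gamma β * (α * Real.Gamma α) / ((α+β) * Real.Gamma (α+β)) := by
    rw [rB_eq_Gamma (by linarith) (by linarith), show β+(α+1) = (α+β)+1 by ring,
      Real.Gamma_add_one hαβ.ne', Real.Gamma_add_one (by linarith : α ≠ 0)]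
  have e1' : rB (β-1/2) (α-1/2)
      = Real.Gamma (β-1/2) * Real.Gamma (α-1/2) / Real.Gamma (α+β-1) := by
    rw [rB_eq_Gamma hβ2 hα2, show β-1/2+(α-1/2) = α+β-1 by ring]
  have e2' : rB (α+β-1) (α+β-1)
      = Real.Gamma (α+β-1) * Real.Gamma (α+β-1) / Real.Gamma (α+β-1+(α+β-1)) := by
    rw [rB_eq_Gamma hαβ1 hαβ1]
  have e3' : rB β α
      = Real.Gamma β * Real.Gamma α / ((α+β-1) * Real.Gamma (α+β-1)) := by
    rw [rB_eq_Gamma (by linarith) (by linarith), show β+α = α+β by ring, hG6]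
  have e4 : (4:ℝ)^(α+1+β-2) = 4^(α+β-2) * 4 := by
    rw [show α+1+β-2 = (α+β-2)+1 by ring,
      Real.rpow_add_one (by norm_num : (4:ℝ) ≠ 0)]
  have hg1 : Real.Gamma (α+β-1) ≠ 0 := (Real.Gamma_pos_of_pos hαβ1).ne'
  have hg2 : Real.Gamma (α+β-1+(α+β-1)) ≠ 0 :=
    (Real.Gamma_pos_of_pos (by linarith)).ne'
  have hne1 : (α+β-1+(α+β-1))+1 ≠ 0 := by positivity
  have hne2 : α+β-1+(α+β-1) ≠ 0 := by positivity
  have hne3 : α+β-1/2 ≠ 0 := (by linarith : (0:ℝ) < α+β-1/2).ne'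
  have hne4 : α+β ≠ 0 := hαβ.ne'
  have E1 : rB (β-1/2) (α+1-1/2) = (α-1/2)/(α+β-1) * rB (β-1/2) (α-1/2) := by
    rw [e1, e1', hG6]
    field_simp
  have E2 : rB (α+1+β-1) (α+1+β-1)
      = (α+β-1)*(α+β-1)/(((α+β-1+(α+β-1))+1)*(α+β-1+(α+β-1)))
        * rB (α+β-1) (α+β-1) := by
    rw [e2, e2', hG6]
    field_simp
  have E3 : rB β (α+1) = α/(α+β) * rB β α := by
    rw [e3, e3', hG6]
    field_simp
  have scal : (α-1/2)/(α+β-1) *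
      ((α+β-1)*(α+β-1)/((α+β-1+(α+β-1)+1)*(α+β-1+(α+β-1)))) * (α/(α+β)) * 4
      = (α*(α-1/2))/((α+β)*(α+β-1/2)) := by
    rw [div_mul_div_comm, div_mul_div_comm, div_mul_eq_mul_div,
      div_eq_div_iff
        (mul_ne_zero (mul_ne_zero hαβ1.ne' (mul_ne_zero hne1 hne2)) hne4)
        (mul_ne_zero hne4 hne3)]
    ring
  rw [B2_eq (by linarith : 1/2 < α + 1) hβ, B2_eq hα hβ, E1, E2, E3, e4]
  linear_combination (rB (β-1/2) (α-1/2) * (2*4^(α+β-2) * rB (α+β-1) (α+β-1)) * rB β α)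
    * scal
end

section
/- For all real α, β > 1/2, the integral defining the multivariate Beta function converges and is positive: 0 < B₂(α,β) < ∞, i.e. the function (x,y,z) ↦ ((1−x)(1−y) − z²)^(α−3/2) (xy − z²)^(β−3/2) is integrable on Ω and has positive integral, so the 2×2 multivariate Beta density is a well-defined probability density. -/
open MeasureTheory Real Filter Finset

/- ## Auxiliary lemmas -/

open Set

lemma BB_meas_aux (a b : ℝ) : Measurable (fun t : ℝ => (1-t)^a * t^b) := by fun_prop

lemma BB_half_bound {a t lo : ℝ} (hlo : 0 < lo) (h1 : lo ≤ t) (h2 : t ≤ 1) :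
    t ^ a ≤ max (lo ^ a) 1 := by
  rcases le_or_gt 0 a with h | h
  · exact le_max_of_le_right (Real.rpow_le_one (by linarith) h2 h)
  · exact le_max_of_le_left (Real.rpow_le_rpow_of_nonpos hlo h1 h.le)

lemma BB_base_int {a b : ℝ} (ha : -1 < a) (hb : -1 < b) :
    IntegrableOn (fun t : ℝ => (1-t)^a * t^b) (Ioo 0 1) := by
  have h1 : IntegrableOn (fun t : ℝ => (1-t)^a * t^b) (Ioc 0 (1/2)) := by
    have hint : IntegrableOn (fun t : ℝ => t^b) (Ioc (0:ℝ) (1/2)) := by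
      rw [← intervalIntegrable_iff_integrableOn_Ioc_of_le (by norm_num)]
      exact intervalIntegral.intervalIntegrable_rpow' hb
    refine Integrable.mono' (hint.const_mul (max (((1:ℝ)/2) ^ a) 1)) ?_ ?_
    · exact (BB_meas_aux a b).aestronglyMeasurable.restrict
    · filter_upwards [ae_restrict_mem measurableSet_Ioc] with t ht
      rw [Real.norm_eq_abs, abs_mul, abs_of_nonneg (Real.rpow_nonneg (by linarith [ht.2] : (0:ℝ) ≤ 1 - t) a),
        abs_of_nonneg (Real.rpow_nonneg ht.1.le b)]
      exact mul_le_mul_of_nonneg_right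
        (BB_half_bound (by norm_num) (by linarith [ht.2]) (by linarith [ht.1]))
        (Real.rpow_nonneg ht.1.le b)
  have h2 : IntegrableOn (fun t : ℝ => (1-t)^a * t^b) (Ioo (1/2) 1) := by
    have hint : IntegrableOn (fun t : ℝ => (1-t)^a) (Ioo ((1:ℝ)/2) 1) := by
      have h := ((intervalIntegral.intervalIntegrable_rpow' ha (a := 0) (b := 1/2)).comp_sub_left 1).symm
      simp only [sub_zero, show (1:ℝ) - 1/2 = 1/2 by norm_num] at h
      rwa [intervalIntegrable_iff_integrableOn_Ioo_of_le (by norm_num)] at h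
    refine Integrable.mono' (hint.const_mul (max (((1:ℝ)/2) ^ b) 1)) ?_ ?_
    · exact (BB_meas_aux a b).aestronglyMeasurable.restrict
    · filter_upwards [ae_restrict_mem measurableSet_Ioo] with t ht
      rw [Real.norm_eq_abs, abs_mul, abs_of_nonneg (Real.rpow_nonneg (by linarith [ht.2] : (0:ℝ) ≤ 1 - t) a),
        abs_of_nonneg (Real.rpow_nonneg (by linarith [ht.1] : (0:ℝ) ≤ t) b), mul_comm]
      exact mul_le_mul_of_nonneg_right
        (BB_half_bound (by norm_num) ht.1.le ht.2.le)
        (Real.rpow_nonneg (by linarith [ht.2]) a)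
  have hcup : Set.Ioc (0:ℝ) (1/2) ∪ Set.Ioo (1/2) 1 = Set.Ioo (0:ℝ) 1 := Set.Ioc_union_Ioo_eq_Ioo (by norm_num) (by norm_num)
  rw [← hcup]
  exact h1.union h2

noncomputable def Jab (a b : ℝ) : ℝ := ∫ t in (0:ℝ)..1, (1-t)^a * t^b

lemma Jab_nonneg (a b : ℝ) : 0 ≤ Jab a b := by
  rw [Jab, intervalIntegral.integral_of_le (by norm_num)]
  refine setIntegral_nonneg measurableSet_Ioc fun t ht => ?_
  exact mul_nonneg (Real.rpow_nonneg (by linarith [ht.2]) a) (Real.rpow_nonneg ht.1.le b)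

lemma BB_base_II {a b : ℝ} (ha : -1 < a) (hb : -1 < b) :
    IntervalIntegrable (fun t : ℝ => (1-t)^a * t^b) volume 0 1 := by
  rw [intervalIntegrable_iff_integrableOn_Ioo_of_le (by norm_num)]
  exact BB_base_int ha hb

lemma BB_shift_int {a b x₀ x₁ : ℝ} (ha : -1 < a) (hb : -1 < b) (h : x₀ < x₁) :
    IntegrableOn (fun x => (x₁ - x)^a * (x - x₀)^b) (Ioo x₀ x₁) ∧
    ∫ x in Ioo x₀ x₁, (x₁ - x)^a * (x - x₀)^b = (x₁ - x₀)^(a+b+1) * Jab a b := by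
  set f₀ : ℝ → ℝ := fun t => (1-t)^a * t^b with hf₀
  set r := x₁ - x₀ with hr
  have hr0 : 0 < r := by simp only [hr]; linarith
  set u : ℝ → ℝ := fun x => r⁻¹ * x + -(x₀ * r⁻¹) with hu
  have hII : IntervalIntegrable (fun x => f₀ (u x)) volume x₀ x₁ := by
    have h1 := (BB_base_II ha hb).comp_mul_right (c := r⁻¹)
    have h2 := h1.comp_sub_right x₀
    have e1 : (0:ℝ) / r⁻¹ + x₀ = x₀ := by simp
    have e2 : (1:ℝ) / r⁻¹ + x₀ = x₁ := by rw [one_div, inv_inv, hr]; ring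
    rw [e1, e2] at h2
    have : (fun x => f₀ ((x - x₀) * r⁻¹)) = fun x => f₀ (u x) := by
      funext x; congr 1; simp only [hu]; ring
    exact this ▸ h2
  have hEqOn : EqOn (fun x => (x₁ - x)^a * (x - x₀)^b)
      (fun x => r^(a+b) * f₀ (u x)) (Icc x₀ x₁) := by
    intro x hx
    have e1 : x₁ - x = r * (1 - u x) := by simp only [hu]; field_simp; ring
    have e2 : x - x₀ = r * u x := by simp only [hu]; field_simp; ring
    have hn1 : (0:ℝ) ≤ 1 - u x := by
      nlinarith [hx.2, inv_pos.mpr hr0, mul_pos hr0 (inv_pos.mpr hr0),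
        inv_mul_cancel₀ hr0.ne']
    have hn2 : (0:ℝ) ≤ u x := by
      have h1 := hx.1
      have h2 : 0 ≤ (x - x₀) * r⁻¹ := mul_nonneg (by linarith) (inv_pos.mpr hr0).le
      simp only [hu]; linarith [h2]
    simp only [hf₀]
    rw [e1, e2, Real.mul_rpow hr0.le hn1, Real.mul_rpow hr0.le hn2, Real.rpow_add hr0]
    ring
  constructor
  · rw [IntegrableOn]
    have hII' : IntegrableOn (fun x => r^(a+b) * f₀ (u x)) (Ioo x₀ x₁) := by
      rw [intervalIntegrable_iff_integrableOn_Ioo_of_le h.le] at hII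
      exact hII.const_mul _
    exact hII'.congr_fun (fun x hx => (hEqOn (Ioo_subset_Icc_self hx)).symm) measurableSet_Ioo
  · have e0 : r⁻¹ * x₀ + -(x₀ * r⁻¹) = 0 := by ring
    have e1 : r⁻¹ * x₁ + -(x₀ * r⁻¹) = 1 := by
      rw [hr] at hr0 ⊢; field_simp; ring
    calc ∫ x in Ioo x₀ x₁, (x₁ - x)^a * (x - x₀)^b
        = ∫ x in Ioc x₀ x₁, (x₁ - x)^a * (x - x₀)^b := (MeasureTheory.integral_Ioc_eq_integral_Ioo).symm
      _ = ∫ x in x₀..x₁, (x₁ - x)^a * (x - x₀)^b := (intervalIntegral.integral_of_le h.le).symm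
      _ = ∫ x in x₀..x₁, r^(a+b) * f₀ (u x) := intervalIntegral.integral_congr (by rwa [uIcc_of_le h.le])
      _ = r^(a+b) * ∫ x in x₀..x₁, f₀ (u x) := intervalIntegral.integral_const_mul _ _
      _ = r^(a+b) * ((r⁻¹)⁻¹ • ∫ t in (r⁻¹ * x₀ + -(x₀ * r⁻¹))..(r⁻¹ * x₁ + -(x₀ * r⁻¹)), f₀ t) := by
          rw [intervalIntegral.integral_comp_mul_add f₀ (inv_ne_zero hr0.ne') (-(x₀ * r⁻¹))]
      _ = r^(a+b) * (r * Jab a b) := by rw [e0, e1, inv_inv, smul_eq_mul, Jab, hf₀]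
      _ = r^(a+b+1) * Jab a b := by rw [Real.rpow_add_one hr0.ne']; ring

def Sreg : Set (ℝ × ℝ) := {q | 0 < q.1 ∧ q.1 < 1 ∧ q.2 ^ 2 < q.1 * (1 - q.1)}

noncomputable def lo (q : ℝ × ℝ) : ℝ := q.2 ^ 2 / q.1
noncomputable def hi (q : ℝ × ℝ) : ℝ := 1 - q.2 ^ 2 / (1 - q.1)

lemma BB_slice_eq (q : ℝ × ℝ) (x : ℝ) :
    (x, q) ∈ Omega ↔ q ∈ Sreg ∧ x ∈ Ioo (lo q) (hi q) := by
  obtain ⟨y, z⟩ := q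
  simp only [Omega, Sreg, lo, hi, Set.mem_setOf_eq, Set.mem_Ioo]
  constructor
  · rintro ⟨h1, h2, h3, h4⟩
    have hy0 : 0 < y := by nlinarith [sq_nonneg z]
    have hy1 : y < 1 := by nlinarith [sq_nonneg z]
    have hx0 : z ^ 2 / y < x := by rw [div_lt_iff₀ hy0]; nlinarith
    have hx1 : x < 1 - z ^ 2 / (1 - y) := by
      have h5 : z ^ 2 / (1 - y) < 1 - x := by rw [div_lt_iff₀ (by linarith)]; nlinarith
      linarith
    refine ⟨⟨hy0, hy1, ?_⟩, hx0, hx1⟩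
    nlinarith
  · rintro ⟨⟨hy0, hy1, hS⟩, hx0, hx1⟩
    have hz : (0:ℝ) ≤ z ^ 2 / y := div_nonneg (sq_nonneg z) hy0.le
    have hz' : (0:ℝ) ≤ z ^ 2 / (1 - y) := div_nonneg (sq_nonneg z) (by linarith)
    have h3 : z ^ 2 < x * y := by
      rw [div_lt_iff₀ hy0] at hx0; linarith [hx0]
    have h4 : z ^ 2 < (1 - x) * (1 - y) := by
      have h5 : z ^ 2 / (1 - y) < 1 - x := by linarith
      rw [div_lt_iff₀ (by linarith : (0:ℝ) < 1 - y)] at h5; linarith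
    exact ⟨by linarith, by linarith, by linarith, by linarith⟩

lemma BB_width_pos {q : ℝ × ℝ} (hq : q ∈ Sreg) : lo q < hi q ∧
    hi q - lo q = (q.1 * (1 - q.1) - q.2 ^ 2) / (q.1 * (1 - q.1)) := by
  obtain ⟨y, z⟩ := q
  obtain ⟨hy0, hy1, hS⟩ := hq
  simp only [lo, hi] at *
  have hy1' : (0:ℝ) < 1 - y := by linarith
  have heq : 1 - z ^ 2 / (1 - y) - z ^ 2 / y = (y * (1 - y) - z ^ 2) / (y * (1 - y)) := by
    field_simp; ring
  refine ⟨?_, heq⟩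
  have h5 : 0 < 1 - z ^ 2 / (1 - y) - z ^ 2 / y := by
    rw [heq]; exact div_pos (by linarith) (by positivity)
  linarith

lemma BB_dens_eq {α β : ℝ} {q : ℝ × ℝ} (hq : q ∈ Sreg) {x : ℝ} (hx : x ∈ Ioo (lo q) (hi q)) :
    betaDens α β (x, q) =
      ((1 - q.1) ^ (α - 3/2) * q.1 ^ (β - 3/2)) *
        ((hi q - x) ^ (α - 3/2) * (x - lo q) ^ (β - 3/2)) := by
  obtain ⟨y, z⟩ := q
  obtain ⟨hy0, hy1, hS⟩ := hq
  simp only [betaDens, lo, hi] at *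
  have hy1' : (0:ℝ) < 1 - y := by linarith
  have e1 : (1 - x) * (1 - y) - z ^ 2 = (1 - y) * ((1 - z ^ 2 / (1 - y)) - x) := by
    field_simp; ring
  have e2 : x * y - z ^ 2 = y * (x - z ^ 2 / y) := by field_simp
  have hn1 : 0 ≤ (1 - z ^ 2 / (1 - y)) - x := by linarith [hx.2]
  have hn2 : 0 ≤ x - z ^ 2 / y := by linarith [hx.1]
  rw [e1, e2, Real.mul_rpow hy1'.le hn1, Real.mul_rpow hy0.le hn2]
  ring

lemma isOpen_Omega : IsOpen Omega := by
  have h1 : IsOpen {p : ℝ × ℝ × ℝ | 0 < p.1} := isOpen_lt continuous_const continuous_fst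
  have h2 : IsOpen {p : ℝ × ℝ × ℝ | 0 < 1 - p.1} :=
    isOpen_lt continuous_const (by fun_prop)
  have h3 : IsOpen {p : ℝ × ℝ × ℝ | 0 < p.1 * p.2.1 - p.2.2 ^ 2} :=
    isOpen_lt continuous_const (by fun_prop)
  have h4 : IsOpen {p : ℝ × ℝ × ℝ | 0 < (1 - p.1) * (1 - p.2.1) - p.2.2 ^ 2} :=
    isOpen_lt continuous_const (by fun_prop)
  have he : Omega = ({p : ℝ × ℝ × ℝ | 0 < p.1} ∩ {p | 0 < 1 - p.1}) ∩
      ({p | 0 < p.1 * p.2.1 - p.2.2 ^ 2} ∩ {p | 0 < (1 - p.1) * (1 - p.2.1) - p.2.2 ^ 2}) := by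
    ext p; simp only [Omega, Set.mem_setOf_eq, Set.mem_inter_iff]; tauto
  rw [he]
  exact (h1.inter h2).inter (h3.inter h4)

lemma measurable_betaDens (α β : ℝ) : Measurable (betaDens α β) := by
  unfold betaDens; fun_prop

lemma measurableSet_Sreg : MeasurableSet Sreg := by
  have : IsOpen Sreg := by
    have h1 : IsOpen {q : ℝ × ℝ | 0 < q.1} := isOpen_lt continuous_const continuous_fst
    have h2 : IsOpen {q : ℝ × ℝ | q.1 < 1} := isOpen_lt continuous_fst continuous_const
    have h3 : IsOpen {q : ℝ × ℝ | q.2 ^ 2 < q.1 * (1 - q.1)} :=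
      isOpen_lt (by fun_prop) (by fun_prop)
    have he : Sreg = ({q : ℝ × ℝ | 0 < q.1} ∩ {q | q.1 < 1}) ∩ {q | q.2 ^ 2 < q.1 * (1 - q.1)} := by
      ext q; simp only [Sreg, Set.mem_setOf_eq, Set.mem_inter_iff]; tauto
    rw [he]; exact (h1.inter h2).inter h3
  exact this.measurableSet

noncomputable def Gfun (a b : ℝ) : ℝ × ℝ → ℝ :=
  Sreg.indicator fun q => ((1 - q.1)^a * q.1^b) * ((hi q - lo q)^(a+b+1) * Jab a b)

lemma Sreg_mem_iff {y z : ℝ} (hy : y ∈ Ioo (0:ℝ) 1) :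
    (y, z) ∈ Sreg ↔ z ∈ Ioo (-Real.sqrt (y*(1-y))) (Real.sqrt (y*(1-y))) := by
  have hD : 0 < y * (1 - y) := mul_pos hy.1 (by linarith [hy.2])
  have h1 : z ^ 2 < y * (1-y) ↔ |z| < Real.sqrt (y*(1-y)) := by
    rw [← Real.sqrt_lt_sqrt_iff (sq_nonneg z), Real.sqrt_sq_eq_abs]
  simp only [Sreg, Set.mem_setOf_eq, Set.mem_Ioo, h1, abs_lt]
  constructor
  · rintro ⟨-, -, h⟩; exact h
  · intro h; exact ⟨hy.1, hy.2, h⟩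

lemma Gfun_integrable {a b : ℝ} (ha : -1 < a) (hb : -1 < b) :
    Integrable (Gfun a b) (volume : Measure (ℝ × ℝ)) := by
  set c := a + b + 1 with hcdef
  have hc : -1 < c := by simp only [hcdef]; linarith
  have hGmeas : Measurable (Gfun a b) := by
    refine Measurable.indicator ?_ measurableSet_Sreg
    unfold hi lo; fun_prop
  have hGnn : ∀ q, 0 ≤ Gfun a b q := by
    intro q
    refine Set.indicator_nonneg (fun q hq => ?_) q
    have hw := (BB_width_pos hq).1
    refine mul_nonneg (mul_nonneg (Real.rpow_nonneg (by linarith [hq.2.1]) _)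
      (Real.rpow_nonneg hq.1.le _)) (mul_nonneg (Real.rpow_nonneg (by linarith) _) (Jab_nonneg a b))
  -- slice in z for fixed y
  have hzslice : ∀ y ∈ Ioo (0:ℝ) 1, (fun z => Gfun a b (y, z)) =
      (Ioo (-Real.sqrt (y*(1-y))) (Real.sqrt (y*(1-y)))).indicator
        (fun z => ((1-y)^a * y^b * Jab a b / (y*(1-y))^c) *
          ((Real.sqrt (y*(1-y)) - z)^c * (z - (-Real.sqrt (y*(1-y))))^c)) := by
    intro y hy
    have hD : 0 < y * (1 - y) := mul_pos hy.1 (by linarith [hy.2])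
    set m := Real.sqrt (y*(1-y)) with hm
    have hm0 : 0 < m := Real.sqrt_pos.mpr hD
    have hmm : m * m = y * (1-y) := Real.mul_self_sqrt hD.le
    funext z
    by_cases hz : z ∈ Ioo (-m) m
    · have hq : (y, z) ∈ Sreg := (Sreg_mem_iff hy).mpr hz
      rw [Set.indicator_of_mem hz, Gfun, Set.indicator_of_mem hq]
      have hwid := (BB_width_pos hq).2
      simp only at hwid
      have e1 : y * (1-y) - z^2 = (m - z) * (z - (-m)) := by nlinarith [hmm]
      have hn1 : (0:ℝ) ≤ m - z := by linarith [hz.2]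
      have hn2 : (0:ℝ) ≤ z - (-m) := by linarith [hz.1]
      rw [hwid, e1, Real.div_rpow (by positivity) hD.le, Real.mul_rpow hn1 hn2]
      ring
    · have hq : (y, z) ∉ Sreg := fun h => hz ((Sreg_mem_iff hy).mp h)
      rw [Set.indicator_of_notMem hz, Gfun, Set.indicator_of_notMem hq]
  have hzslice0 : ∀ y : ℝ, y ∉ Ioo (0:ℝ) 1 → (fun z => Gfun a b (y, z)) = 0 := by
    intro y hy
    funext z
    have hq : (y, z) ∉ Sreg := by
      intro h
      exact hy ⟨h.1, h.2.1⟩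
    rw [Gfun, Set.indicator_of_notMem hq]; rfl
  rw [show (volume : Measure (ℝ × ℝ)) = ((volume : Measure ℝ).prod (volume : Measure ℝ)) from rfl]
  rw [integrable_prod_iff hGmeas.aestronglyMeasurable]
  constructor
  · refine ae_of_all _ fun y => ?_
    by_cases hy : y ∈ Ioo (0:ℝ) 1
    · rw [hzslice y hy, integrable_indicator_iff measurableSet_Ioo]
      have hD : 0 < y * (1 - y) := mul_pos hy.1 (by linarith [hy.2])
      have hm0 : 0 < Real.sqrt (y*(1-y)) := Real.sqrt_pos.mpr hD
      exact ((BB_shift_int hc hc (by linarith : -Real.sqrt (y*(1-y)) < Real.sqrt (y*(1-y)))).1).const_mul _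
    · rw [hzslice0 y hy]
      exact integrable_zero _ _ _
  · -- compute the z-integral and reduce to a 1-D Beta integral in y
    have hHeq : (fun y : ℝ => ∫ z : ℝ, ‖Gfun a b (y, z)‖) =
        (Ioo (0:ℝ) 1).indicator (fun y =>
          (2^(c+c+1) * Jab a b * Jab c c) * ((1-y)^(a+1/2) * y^(b+1/2))) := by
      funext y
      by_cases hy : y ∈ Ioo (0:ℝ) 1
      · have hD : 0 < y * (1 - y) := mul_pos hy.1 (by linarith [hy.2])
        set m := Real.sqrt (y*(1-y)) with hm
        have hm0 : 0 < m := Real.sqrt_pos.mpr hD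
        simp only [fun z => Real.norm_of_nonneg (hGnn (y, z))]
        rw [hzslice y hy, MeasureTheory.integral_indicator measurableSet_Ioo,
          MeasureTheory.integral_const_mul _ _,
          (BB_shift_int hc hc (by linarith : -m < m)).2, Set.indicator_of_mem hy]
        have e2 : m - -m = 2 * m := by ring
        rw [e2]
        -- algebraic simplification
        have h2m : ((2:ℝ) * m)^(c+c+1) = 2^(c+c+1) * m^(c+c+1) :=
          Real.mul_rpow (by norm_num) hm0.le
        have hmpow : m^(c+c+1) = (y*(1-y))^((1/2 : ℝ) * (c+c+1)) := by
          rw [hm, Real.sqrt_eq_rpow, ← Real.rpow_mul hD.le]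
        have hDsplit : (y*(1-y))^((1/2:ℝ)*(c+c+1)) = (y*(1-y))^c * (y*(1-y))^((1/2:ℝ)) := by
          rw [← Real.rpow_add hD]; congr 1; ring
        have hDhalf : (y*(1-y))^((1/2:ℝ)) = y^((1/2:ℝ)) * (1-y)^((1/2:ℝ)) :=
          Real.mul_rpow hy.1.le (by linarith [hy.2])
        have hya : y^(b+1/2) = y^b * y^((1/2:ℝ)) := Real.rpow_add hy.1 b (1/2)
        have h1ya : (1-y)^(a+1/2) = (1-y)^a * (1-y)^((1/2:ℝ)) :=
          Real.rpow_add (by linarith [hy.2] : (0:ℝ) < 1 - y) a (1/2)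
        have hDc : ((y*(1-y)) : ℝ)^c ≠ 0 := (Real.rpow_pos_of_pos hD c).ne'
        rw [h2m, hmpow, hDsplit, hDhalf, hya, h1ya]
        field_simp
      · rw [Set.indicator_of_notMem hy]
        have h0 := hzslice0 y hy
        rw [funext_iff] at h0
        simp only [Pi.zero_apply] at h0
        simp [h0]
    rw [hHeq]
    rw [integrable_indicator_iff measurableSet_Ioo]
    exact (BB_base_int (by linarith : (-1:ℝ) < a + 1/2) (by linarith : (-1:ℝ) < b + 1/2)).const_mul _


lemma betaDens_integrableOn {α β : ℝ} (hα : 1/2 < α) (hβ : 1/2 < β) :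
    IntegrableOn (betaDens α β) Omega volume := by
  set a := α - 3/2 with hadef
  set b := β - 3/2 with hbdef
  have ha : -1 < a := by simp only [hadef]; linarith
  have hb : -1 < b := by simp only [hbdef]; linarith
  set F : ℝ × ℝ × ℝ → ℝ := Omega.indicator (betaDens α β) with hFdef
  have hΩm : MeasurableSet Omega := isOpen_Omega.measurableSet
  have hFmeas : Measurable F := (measurable_betaDens α β).indicator hΩm
  -- nonnegativity of F
  have hFnn : ∀ p, 0 ≤ F p := by
    intro p
    simp only [hFdef]
    refine Set.indicator_nonneg (fun p hp => ?_) p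
    exact mul_nonneg (Real.rpow_nonneg hp.2.2.2.le _) (Real.rpow_nonneg hp.2.2.1.le _)
  -- slice description
  have hslice : ∀ q : ℝ × ℝ, q ∈ Sreg →
      (fun x => F (x, q)) = (Ioo (lo q) (hi q)).indicator
        (fun x => ((1 - q.1)^a * q.1^b) * ((hi q - x)^a * (x - lo q)^b)) := by
    intro q hq
    funext x
    by_cases hx : x ∈ Ioo (lo q) (hi q)
    · rw [Set.indicator_of_mem hx]
      have hmem : (x, q) ∈ Omega := (BB_slice_eq q x).mpr ⟨hq, hx⟩
      simp only [hFdef, Set.indicator_of_mem hmem]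
      exact BB_dens_eq hq hx
    · rw [Set.indicator_of_notMem hx]
      have hmem : (x, q) ∉ Omega := fun h => hx ((BB_slice_eq q x).mp h).2
      simp only [hFdef, Set.indicator_of_notMem hmem]
  have hslice0 : ∀ q : ℝ × ℝ, q ∉ Sreg → (fun x => F (x, q)) = 0 := by
    intro q hq
    funext x
    have hmem : (x, q) ∉ Omega := fun h => hq ((BB_slice_eq q x).mp h).1
    simp only [hFdef, Set.indicator_of_notMem hmem, Pi.zero_apply]
  have hFint : Integrable F (volume : Measure (ℝ × ℝ × ℝ)) := by
    rw [show (volume : Measure (ℝ × ℝ × ℝ)) = ((volume : Measure ℝ).prod (volume : Measure (ℝ × ℝ))) from rfl]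
    rw [integrable_prod_iff' hFmeas.aestronglyMeasurable]
    constructor
    · refine ae_of_all _ fun q => ?_
      by_cases hq : q ∈ Sreg
      · rw [hslice q hq]
        rw [integrable_indicator_iff measurableSet_Ioo]
        exact ((BB_shift_int ha hb (BB_width_pos hq).1).1).const_mul _
      · rw [hslice0 q hq]
        exact integrable_zero _ _ _
    · have hGeq : (fun q : ℝ × ℝ => ∫ x : ℝ, ‖F (x, q)‖) = Gfun a b := by
        funext q
        by_cases hq : q ∈ Sreg
        · simp only [fun x => Real.norm_of_nonneg (hFnn (x, q))]
          rw [hslice q hq, MeasureTheory.integral_indicator measurableSet_Ioo,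
            MeasureTheory.integral_const_mul _ _, (BB_shift_int ha hb (BB_width_pos hq).1).2,
            Gfun, Set.indicator_of_mem hq]
        · simp only [fun x => Real.norm_of_nonneg (hFnn (x, q))]
          rw [hslice0 q hq]
          simp only [Pi.zero_apply, Gfun, Set.indicator_of_notMem hq]
          exact integral_zero _ _
      rw [hGeq]
      exact Gfun_integrable ha hb
  rwa [hFdef, integrable_indicator_iff hΩm] at hFint


lemma betaDens_pos {α β : ℝ} {p : ℝ × ℝ × ℝ} (hp : p ∈ Omega) : 0 < betaDens α β p :=
  mul_pos (Real.rpow_pos_of_pos hp.2.2.2 _) (Real.rpow_pos_of_pos hp.2.2.1 _)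

/-- The defining integral of B₂(α,β) converges and is positive. -/
theorem B2_integrable_pos (α β : ℝ) (hα : 1/2 < α) (hβ : 1/2 < β) :
    IntegrableOn (betaDens α β) Omega volume ∧ 0 < B2 α β := by
  have hInt := betaDens_integrableOn hα hβ
  refine ⟨hInt, ?_⟩
  have hΩm : MeasurableSet Omega := isOpen_Omega.measurableSet
  have hne : Omega.Nonempty := by
    refine ⟨(1/2, 1/2, 0), ?_⟩
    simp only [Omega, Set.mem_setOf_eq]
    norm_num
  rw [B2, MeasureTheory.setIntegral_pos_iff_support_of_nonneg_ae ?hnn hInt]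
  case hnn =>
    rw [Filter.EventuallyLE, ae_restrict_iff' hΩm]
    exact ae_of_all _ fun p hp => (betaDens_pos hp).le
  refine lt_of_lt_of_le (isOpen_Omega.measure_pos volume hne) (measure_mono ?_)
  intro p hp
  exact ⟨Function.mem_support.mpr (betaDens_pos hp).ne', hp⟩
end
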